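/- The group T with presentation ⟨a, b | a·b·a = b·a·b, (a·b)⁶ = 1⟩ has abelianization isomorphic to Z/12Z, generated by the image of a. -/

import Mathlib

/-- Relations of the presentation `⟨a, b | aba = bab, (ab)⁶ = 1⟩`. -/
def twistRels3 : Set (FreeGroup (Fin 2)) :=
  { FreeGroup.of 0 * FreeGroup.of 1 * FreeGroup.of 0 *
      (FreeGroup.of 1 * FreeGroup.of 0 * FreeGroup.of 1)⁻¹,
    (FreeGroup.of 0 * FreeGroup.of 1) ^ 6 }

namespace Twist3Aux

abbrev G := PresentedGroup twistRels3
abbrev H := Abelianization G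

noncomputable abbrev α : H := Abelianization.of (PresentedGroup.of 0)
noncomputable abbrev β : H := Abelianization.of (PresentedGroup.of 1)

lemma rel_eq_one {r : FreeGroup (Fin 2)} (hr : r ∈ twistRels3) :
    PresentedGroup.mk twistRels3 r = 1 := by
  exact (QuotientGroup.eq_one_iff r).mpr (Subgroup.subset_normalClosure hr)

lemma braid : α * β * α = β * α * β := by
  have h := rel_eq_one (r := FreeGroup.of 0 * FreeGroup.of 1 * FreeGroup.of 0 *
      (FreeGroup.of 1 * FreeGroup.of 0 * FreeGroup.of 1)⁻¹) (by left; rfl)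
  simp only [map_mul, map_inv] at h
  have h' : (PresentedGroup.of (rels := twistRels3) 0 : G) * PresentedGroup.of 1 *
      PresentedGroup.of 0 = PresentedGroup.of 1 * PresentedGroup.of 0 * PresentedGroup.of 1 := by
    have := mul_inv_eq_one.mp h
    exact this
  have := congrArg Abelianization.of h'
  simpa [map_mul] using this

lemma alpha_eq_beta : α = β := by
  have h := braid
  have h2 : α * β * α = α * β * β := by rw [h, mul_comm β α]
  exact mul_left_cancel h2

lemma pow12 : α ^ 12 = 1 := by
  have h := rel_eq_one (r := (FreeGroup.of 0 * FreeGroup.of 1) ^ 6) (by right; rfl)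
  simp only [map_pow, map_mul] at h
  have h' : ((α * β) ^ 6 : H) = 1 := by
    have := congrArg Abelianization.of h
    simp only [map_mul, map_pow, map_one] at this; exact this
  rw [← alpha_eq_beta] at h'
  calc α ^ 12 = (α * α) ^ 6 := by rw [← pow_two, ← pow_mul]
  _ = 1 := h'

noncomputable def phi : H →* Multiplicative (ZMod 12) :=
  Abelianization.lift (PresentedGroup.toGroup (f := fun _ => Multiplicative.ofAdd (1 : ZMod 12))
    (by
      intro r hr
      rcases hr with h | h
      · subst h; simp only [map_mul, map_inv, FreeGroup.lift_apply_of]; group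
      · subst h; simp only [map_pow, map_mul, FreeGroup.lift_apply_of]
        decide))

lemma phi_alpha : phi α = Multiplicative.ofAdd (1 : ZMod 12) := by
  simp [phi, α, Abelianization.lift_apply_of, PresentedGroup.toGroup.of]

lemma smul_cond : ((12 : ℕ) : ℤ) • Additive.ofMul α = 0 := by
  rw [← ofMul_zpow]
  rw [show (0 : Additive H) = Additive.ofMul 1 from rfl]; apply congrArg
  exact_mod_cast pow12

noncomputable def psi : Multiplicative (ZMod 12) →* H :=
  AddMonoidHom.toMultiplicativeLeft
    (ZMod.lift 12 ⟨zmultiplesHom (Additive H) (Additive.ofMul α), smul_cond⟩)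

lemma psi_one : psi (Multiplicative.ofAdd (1 : ZMod 12)) = α := by
  have h1 : (Multiplicative.ofAdd (1 : ZMod 12)).toAdd = (((1:ℤ) : ZMod 12)) := by norm_num
  simp only [psi, AddMonoidHom.coe_toMultiplicativeLeft, Function.comp_apply, h1,
    ZMod.lift_coe, zmultiplesHom_apply, one_smul]
  rfl

end Twist3Aux

lemma comp1 : Twist3Aux.psi.comp Twist3Aux.phi = MonoidHom.id Twist3Aux.H := by
  apply Abelianization.hom_ext
  apply PresentedGroup.ext
  intro x
  fin_cases x
  · show Twist3Aux.psi (Twist3Aux.phi Twist3Aux.α) = Twist3Aux.α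
    rw [Twist3Aux.phi_alpha, Twist3Aux.psi_one]
  · show Twist3Aux.psi (Twist3Aux.phi Twist3Aux.β) = Twist3Aux.β
    rw [← Twist3Aux.alpha_eq_beta, Twist3Aux.phi_alpha, Twist3Aux.psi_one]

lemma comp2 : Twist3Aux.phi.comp Twist3Aux.psi = MonoidHom.id (Multiplicative (ZMod 12)) := by
  refine MonoidHom.ext fun x => ?_
  obtain ⟨k, hk⟩ := ZMod.intCast_surjective (n := 12) x.toAdd
  have hx : x = (Multiplicative.ofAdd (1 : ZMod 12)) ^ k := by
    rw [← ofAdd_zsmul]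
    have : k • (1 : ZMod 12) = x.toAdd := by rw [zsmul_eq_mul, mul_one]; exact hk
    rw [this]; rfl
  subst hx
  simp only [MonoidHom.comp_apply, map_zpow, Twist3Aux.psi_one, Twist3Aux.phi_alpha,
    MonoidHom.id_apply]

/-- The group `T = ⟨a, b | aba = bab, (ab)⁶ = 1⟩` has abelianization `ℤ/12`,
generated by the image of `a`. -/
theorem stmt3 :
    Nonempty (Abelianization (PresentedGroup twistRels3) ≃*
        Multiplicative (ZMod 12)) ∧
      Subgroup.zpowers
        (Abelianization.of (PresentedGroup.of (rels := twistRels3) 0)) = ⊤ := by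
  constructor
  · exact ⟨MonoidHom.toMulEquiv Twist3Aux.phi Twist3Aux.psi comp1 comp2⟩
  · rw [eq_top_iff]
    intro x _
    refine QuotientGroup.induction_on x fun g => ?_
    refine PresentedGroup.generated_by _
      ((Subgroup.zpowers Twist3Aux.α).comap Abelianization.of) ?_ g
    intro j
    fin_cases j
    · exact Subgroup.mem_zpowers _
    · show Twist3Aux.β ∈ Subgroup.zpowers Twist3Aux.α
      rw [← Twist3Aux.alpha_eq_beta]
      exact Subgroup.mem_zpowers _
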